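/- Let X be a finite set and F ⊆ 2^X. In the (a,b) Avoider-Enforcer game on (X,F), if Σ_{F∈F} (1+1/a)^{-|F|} < (1+1/a)^{-a}, then Avoider (as first or second player) has a winning strategy. -/

import Mathlib

open Finset

variable {α : Type*} [Fintype α] [DecidableEq α]

/-- `avoiderWinsAux F a b fuel t A E` : in the (monotone) `(a,b)` Avoider-Enforcer game
on the finite board `α` with family of target sets `F`, from the position where Avoider
has claimed `A` and Enforcer has claimed `E`, the player to move being Avoider if
`t = true` and Enforcer if `t = false`, Avoider can force that by the end of the game
(when all board elements are claimed) he has not fully claimed any target set.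
In each turn the player to move claims at least his bias many previously unclaimed
elements (or all remaining elements if fewer remain).  The `fuel` parameter bounds the
number of remaining turns; since each turn from a position with free elements claims at
least one element (for positive biases), `fuel = |α| + 1` captures the full game. -/
def avoiderWinsAux (F : Finset (Finset α)) (a b : ℕ) :
    ℕ → Bool → Finset α → Finset α → Prop
  | 0, _, A, _ => ¬ ∃ W ∈ F, W ⊆ A
  | fuel + 1, t, A, E =>
      let free := Finset.univ \ (A ∪ E)
      if free.Nonempty then
        if t then
          ∃ S ⊆ free, min a free.card ≤ S.card ∧
            avoiderWinsAux F a b fuel false (A ∪ S) E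
        else
          ∀ S ⊆ free, min b free.card ≤ S.card →
            avoiderWinsAux F a b fuel true A (E ∪ S)
      else ¬ ∃ W ∈ F, W ⊆ A

/-- Avoider has a winning strategy in the `(a,b)` Avoider-Enforcer game `(α, F)`,
moving first (`t = true`) or second (`t = false`). -/
def AvoiderWins (F : Finset (Finset α)) (a b : ℕ) (t : Bool) : Prop :=
  avoiderWinsAux F a b (Fintype.card α + 1) t ∅ ∅

set_option linter.unusedSectionVars false
set_option linter.unusedVariables false

namespace AvoiderCrit

noncomputable def lam (a : ℕ) : ℝ := 1 + 1 / a

def fre (A E : Finset α) : Finset α := Finset.univ \ (A ∪ E)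

noncomputable def pot (F : Finset (Finset α)) (a : ℕ) (A E : Finset α) : ℝ :=
  ∑ W ∈ F.filter (fun W => W ∩ E = ∅), lam a ^ (-(((W \ A).card : ℕ) : ℝ))

noncomputable def dang (F : Finset (Finset α)) (a : ℕ) (A E : Finset α) (y : α) : ℝ :=
  ∑ W ∈ F.filter (fun W => W ∩ E = ∅ ∧ y ∈ W), lam a ^ (-(((W \ A).card : ℕ) : ℝ))

variable {F : Finset (Finset α)} {a : ℕ}

lemma one_lt_lam (ha : 0 < a) : 1 < lam a := by
  have : (0:ℝ) < a := by exact_mod_cast ha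
  unfold lam
  have : 0 < 1 / (a:ℝ) := by positivity
  linarith

lemma lam_pos (ha : 0 < a) : 0 < lam a := lt_trans one_pos (one_lt_lam ha)

lemma pot_nonneg (ha : 0 < a) (A E : Finset α) : 0 ≤ pot F a A E :=
  Finset.sum_nonneg fun W _ => (Real.rpow_pos_of_pos (lam_pos ha) _).le

lemma dang_nonneg (ha : 0 < a) (A E : Finset α) (y : α) : 0 ≤ dang F a A E y :=
  Finset.sum_nonneg fun W _ => (Real.rpow_pos_of_pos (lam_pos ha) _).le

lemma dang_le_pot (ha : 0 < a) (A E : Finset α) (y : α) :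
    dang F a A E y ≤ pot F a A E := by
  apply Finset.sum_le_sum_of_subset_of_nonneg
  · intro W hW
    simp only [Finset.mem_filter] at hW ⊢
    exact ⟨hW.1, hW.2.1⟩
  · intro W _ _
    exact (Real.rpow_pos_of_pos (lam_pos ha) _).le

lemma dang_mono (ha : 0 < a) {A A' : Finset α} (E : Finset α) (y : α) (h : A ⊆ A') :
    dang F a A E y ≤ dang F a A' E y := by
  apply Finset.sum_le_sum
  intro W _
  apply Real.rpow_le_rpow_of_exponent_le (one_lt_lam ha).le
  have : (W \ A').card ≤ (W \ A).card :=
    Finset.card_le_card (Finset.sdiff_subset_sdiff Finset.Subset.rfl h)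
  exact_mod_cast neg_le_neg (by exact_mod_cast this)


lemma fre_insert (A E : Finset α) (x : α) :
    fre (insert x A) E = (fre A E).erase x := by
  ext z
  simp only [fre, Finset.mem_sdiff, Finset.mem_union, Finset.mem_insert, Finset.mem_erase,
    Finset.mem_univ, true_and]
  tauto

lemma mem_fre {A E : Finset α} {x : α} : x ∈ fre A E ↔ x ∉ A ∧ x ∉ E := by
  simp [fre]

lemma pot_insert (ha : 0 < a) (A E : Finset α) {x : α} (hx : x ∉ A) :
    pot F a (insert x A) E = pot F a A E + (lam a - 1) * dang F a A E x := by
  classical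
  set g : Finset α → ℝ := fun W => lam a ^ (-(((W \ A).card : ℕ) : ℝ)) with hg
  set g' : Finset α → ℝ := fun W => lam a ^ (-(((W \ insert x A).card : ℕ) : ℝ)) with hg'
  have hsplit := Finset.sum_filter_add_sum_filter_not (F.filter (fun W => W ∩ E = ∅))
      (fun W => x ∈ W) g'
  have hsplit2 := Finset.sum_filter_add_sum_filter_not (F.filter (fun W => W ∩ E = ∅))
      (fun W => x ∈ W) g
  have hfilter : (F.filter (fun W => W ∩ E = ∅)).filter (fun W => x ∈ W)
      = F.filter (fun W => W ∩ E = ∅ ∧ x ∈ W) := by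
    rw [Finset.filter_filter]
  -- terms with x ∈ W get multiplied by lam
  have hin : ∀ W ∈ (F.filter (fun W => W ∩ E = ∅)).filter (fun W => x ∈ W),
      g' W = lam a * g W := by
    intro W hW
    simp only [Finset.mem_filter] at hW
    have hxW : x ∈ W \ A := Finset.mem_sdiff.2 ⟨hW.2, hx⟩
    have hWd : W \ insert x A = (W \ A).erase x := by
      ext z
      simp only [Finset.mem_sdiff, Finset.mem_insert, Finset.mem_erase]
      tauto
    have hcard : (W \ insert x A).card = (W \ A).card - 1 := by
      rw [hWd, Finset.card_erase_of_mem hxW]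
    have h1 : 1 ≤ (W \ A).card := Finset.card_pos.2 ⟨x, hxW⟩ 
    have hcast : (-(((W \ insert x A).card : ℕ) : ℝ)) = 1 + (-(((W \ A).card : ℕ) : ℝ)) := by
      rw [hcard]
      have hc : (((W \ A).card - 1 : ℕ) : ℝ) = ((W \ A).card : ℝ) - 1 := by
        push_cast [Nat.cast_sub h1]
        ring
      rw [hc]
      ring
    simp only [hg, hg']
    rw [hcast, Real.rpow_add (lam_pos ha), Real.rpow_one]
  have hout : ∀ W ∈ (F.filter (fun W => W ∩ E = ∅)).filter (fun W => ¬ x ∈ W),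
      g' W = g W := by
    intro W hW
    simp only [Finset.mem_filter] at hW
    have hWd : W \ insert x A = W \ A := by
      ext z
      simp only [Finset.mem_sdiff, Finset.mem_insert]
      have := hW.2
      constructor
      · rintro ⟨hz, h2⟩; exact ⟨hz, fun h => h2 (Or.inr h)⟩
      · rintro ⟨hz, h2⟩; refine ⟨hz, fun h => ?_⟩
        rcases h with rfl | h
        · exact hW.2 hz
        · exact h2 h
    simp only [hg, hg', hWd]
  have e1 : pot F a (insert x A) E
      = lam a * dang F a A E x + ∑ W ∈ (F.filter (fun W => W ∩ E = ∅)).filter (fun W => ¬ x ∈ W), g W := by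
    rw [pot, ← hsplit]
    congr 1
    · rw [Finset.sum_congr rfl hin, ← Finset.mul_sum, dang, hfilter]
    · exact Finset.sum_congr rfl hout
  have e2 : pot F a A E
      = dang F a A E x + ∑ W ∈ (F.filter (fun W => W ∩ E = ∅)).filter (fun W => ¬ x ∈ W), g W := by
    rw [pot, ← hsplit2]
    congr 1
    rw [dang, hfilter]
  rw [e1, e2]
  ring

lemma pot_enforcer (ha : 0 < a) (A E S : Finset α) {y : α} (hy : y ∈ S) (hyE : y ∉ E) :
    pot F a A (E ∪ S) + dang F a A E y ≤ pot F a A E := by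
  classical
  set g : Finset α → ℝ := fun W => lam a ^ (-(((W \ A).card : ℕ) : ℝ)) with hg
  have hdisj : Disjoint (F.filter (fun W => W ∩ (E ∪ S) = ∅))
      (F.filter (fun W => W ∩ E = ∅ ∧ y ∈ W)) := by
    rw [Finset.disjoint_left]
    intro W hW1 hW2
    simp only [Finset.mem_filter] at hW1 hW2
    have : y ∈ W ∩ (E ∪ S) := Finset.mem_inter.2 ⟨hW2.2.2, Finset.mem_union_right _ hy⟩
    rw [hW1.2] at this
    exact absurd this (Finset.notMem_empty y)
  have hsub : (F.filter (fun W => W ∩ (E ∪ S) = ∅)) ∪ (F.filter (fun W => W ∩ E = ∅ ∧ y ∈ W))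
      ⊆ F.filter (fun W => W ∩ E = ∅) := by
    intro W hW
    rcases Finset.mem_union.1 hW with hW | hW <;> simp only [Finset.mem_filter] at hW ⊢
    · refine ⟨hW.1, ?_⟩
      have : W ∩ E ⊆ W ∩ (E ∪ S) := Finset.inter_subset_inter Finset.Subset.rfl Finset.subset_union_left
      rw [hW.2] at this
      exact Finset.subset_empty.1 this
    · exact ⟨hW.1, hW.2.1⟩
  calc pot F a A (E ∪ S) + dang F a A E y
      = ∑ W ∈ (F.filter (fun W => W ∩ (E ∪ S) = ∅)) ∪ (F.filter (fun W => W ∩ E = ∅ ∧ y ∈ W)), g W := by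
        rw [Finset.sum_union hdisj]; rfl
    _ ≤ pot F a A E := Finset.sum_le_sum_of_subset_of_nonneg hsub
        (fun W _ _ => (Real.rpow_pos_of_pos (lam_pos ha) _).le)


lemma picks (F : Finset (Finset α)) (a : ℕ) (ha : 0 < a) (E : Finset α) :
    ∀ (s : ℕ) (A : Finset α), Disjoint A E → (∀ W ∈ F, ¬ W ⊆ A) →
    pot F a A E < lam a ^ (-(s : ℝ)) →
    ∃ S ⊆ fre A E, S.card = min s (fre A E).card ∧
      (∀ W ∈ F, ¬ W ⊆ A ∪ S) ∧
      ∀ y ∈ fre (A ∪ S) E,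
        pot F a (A ∪ S) E ≤ pot F a A E + s * (lam a - 1) * dang F a (A ∪ S) E y := by
  intro s
  induction s with
  | zero =>
    intro A hdisj hsafe hpot
    refine ⟨∅, Finset.empty_subset _, by simp, by simpa using hsafe, ?_⟩
    intro y hy
    simp
  | succ s IH =>
    intro A hdisj hsafe hpot
    rcases Finset.eq_empty_or_nonempty (fre A E) with hfre | hfre
    · refine ⟨∅, Finset.empty_subset _, by simp [hfre], by simpa using hsafe, ?_⟩
      intro y hy
      rw [Finset.union_empty] at hy
      rw [hfre] at hy
      exact absurd hy (Finset.notMem_empty y)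
    · obtain ⟨x, hxfre, hxmin⟩ := Finset.exists_min_image (fre A E) (dang F a A E) hfre
      obtain ⟨hxA, hxE⟩ := mem_fre.1 hxfre
      have hlam1 := one_lt_lam (a := a) ha
      have hlam0 := lam_pos (a := a) ha
      have hdle := dang_le_pot (F := F) ha A E x
      have hdnn := dang_nonneg (F := F) ha A E x
      -- the new potential after claiming x
      have hpotins : pot F a (insert x A) E = pot F a A E + (lam a - 1) * dang F a A E x :=
        pot_insert ha A E hxA
      have hstep : pot F a (insert x A) E < lam a ^ (-(s : ℝ)) := by
        have h1 : pot F a (insert x A) E ≤ lam a * pot F a A E := by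
          rw [hpotins]
          nlinarith
        have h2 : lam a * pot F a A E < lam a * lam a ^ (-((s+1 : ℕ) : ℝ)) := by
          apply mul_lt_mul_of_pos_left _ hlam0
          exact_mod_cast hpot
        have h3 : lam a ^ (-(s : ℝ)) = lam a * lam a ^ (-((s+1 : ℕ) : ℝ)) := by
          have hexp : (-(s:ℝ)) = 1 + (-((s+1:ℕ):ℝ)) := by push_cast; ring
          rw [hexp, Real.rpow_add hlam0, Real.rpow_one]
        calc pot F a (insert x A) E ≤ lam a * pot F a A E := h1
          _ < lam a ^ (-(s : ℝ)) := by rw [h3]; exact h2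
      -- safety of the pick
      have hsafe1 : ∀ W ∈ F, ¬ W ⊆ insert x A := by
        intro W hW hWsub
        by_cases hWA : W ⊆ A
        · exact hsafe W hW hWA
        · -- W \ A = {x}
          obtain ⟨w, hwW, hwA⟩ := Finset.not_subset.1 hWA
          have hwx : w = x := by
            rcases Finset.mem_insert.1 (hWsub hwW) with h | h
            · exact h
            · exact absurd h hwA
          subst hwx
          have hWdA : W \ A = {w} := by
            apply Finset.Subset.antisymm
            · intro z hz
              rw [Finset.mem_sdiff] at hz
              rcases Finset.mem_insert.1 (hWsub hz.1) with h | h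
              · simp [h]
              · exact absurd h hz.2
            · intro z hz
              rw [Finset.mem_singleton] at hz
              subst hz
              exact Finset.mem_sdiff.2 ⟨hwW, hwA⟩
          have hWE : W ∩ E = ∅ := by
            rw [Finset.eq_empty_iff_forall_notMem]
            intro z hz
            rw [Finset.mem_inter] at hz
            rcases Finset.mem_insert.1 (hWsub hz.1) with h | h
            · subst h; exact hxE hz.2
            · exact (Finset.disjoint_left.1 hdisj h) hz.2
          have hmem : W ∈ F.filter (fun W => W ∩ E = ∅ ∧ w ∈ W) :=
            Finset.mem_filter.2 ⟨hW, hWE, hwW⟩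
          have hterm : lam a ^ (-(((W \ A).card : ℕ) : ℝ)) ≤ dang F a A E w := by
            rw [dang]
            exact Finset.single_le_sum (f := fun V => lam a ^ (-(((V \ A).card : ℕ) : ℝ)))
              (fun V _ => (Real.rpow_pos_of_pos hlam0 _).le) hmem
          rw [hWdA] at hterm
          simp only [Finset.card_singleton, Nat.cast_one] at hterm
          have hbig : dang F a A E w < lam a ^ (-(1 : ℝ)) := by
            calc dang F a A E w ≤ pot F a A E := dang_le_pot ha A E w
              _ < lam a ^ (-((s+1 : ℕ) : ℝ)) := hpot
              _ ≤ lam a ^ (-(1 : ℝ)) := by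
                  apply Real.rpow_le_rpow_of_exponent_le hlam1.le
                  have : (1 : ℝ) ≤ ((s+1 : ℕ) : ℝ) := by exact_mod_cast Nat.one_le_iff_ne_zero.2 (Nat.succ_ne_zero s)
                  linarith
          exact absurd hterm (not_le.2 hbig)
      have hdisj1 : Disjoint (insert x A) E := by
        rw [Finset.disjoint_left]
        intro z hz
        rcases Finset.mem_insert.1 hz with rfl | hz
        · exact hxE
        · exact Finset.disjoint_left.1 hdisj hz
      obtain ⟨S₁, hS₁sub, hS₁card, hS₁safe, hS₁bound⟩ := IH (insert x A) hdisj1 hsafe1 hstep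
      have hxS₁ : x ∉ S₁ := fun h => by
        have := hS₁sub h
        rw [fre_insert] at this
        exact (Finset.ne_of_mem_erase this) rfl
      have hAeq : insert x A ∪ S₁ = A ∪ insert x S₁ := by
        ext z
        simp only [Finset.mem_union, Finset.mem_insert]
        tauto
      refine ⟨insert x S₁, ?_, ?_, ?_, ?_⟩
      · apply Finset.insert_subset hxfre
        calc S₁ ⊆ fre (insert x A) E := hS₁sub
          _ ⊆ fre A E := by rw [fre_insert]; exact Finset.erase_subset _ _
      · rw [Finset.card_insert_of_notMem hxS₁, hS₁card, fre_insert,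
          Finset.card_erase_of_mem hxfre]
        have hfc : 1 ≤ (fre A E).card := Finset.card_pos.2 hfre
        omega
      · intro W hW
        rw [← hAeq]
        exact hS₁safe W hW
      · intro y hy
        rw [← hAeq] at hy ⊢
        have hbound := hS₁bound y hy
        have hyfre : y ∈ fre A E := by
          have : fre (insert x A ∪ S₁) E ⊆ fre A E := by
            intro z hz
            rw [mem_fre] at hz ⊢
            refine ⟨fun h => hz.1 (Finset.mem_union_left _ (Finset.mem_insert_of_mem h)), hz.2⟩
          exact this hy
        have hmono1 : dang F a A E x ≤ dang F a A E y := hxmin y hyfre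
        have hmono2 : dang F a A E y ≤ dang F a (insert x A ∪ S₁) E y :=
          dang_mono ha E y (Finset.Subset.trans (Finset.subset_insert x A) Finset.subset_union_left)
        have hco : (0:ℝ) ≤ lam a - 1 := by linarith
        have : (lam a - 1) * dang F a A E x ≤ (lam a - 1) * dang F a (insert x A ∪ S₁) E y :=
          mul_le_mul_of_nonneg_left (le_trans hmono1 hmono2) hco
        have hs1 : ((s + 1 : ℕ) : ℝ) = (s : ℝ) + 1 := by push_cast; ring
        rw [hpotins] at hbound
        rw [hs1]
        nlinarith [dang_nonneg (F := F) ha (insert x A ∪ S₁) E y]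


end AvoiderCrit

namespace AvoiderCrit

lemma main (F : Finset (Finset α)) (a b : ℕ) (ha : 0 < a) (hb : 0 < b) :
    ∀ (fuel : ℕ) (t : Bool) (A E : Finset α), Disjoint A E → (∀ W ∈ F, ¬ W ⊆ A) →
    (t = true → pot F a A E < lam a ^ (-(a : ℝ))) →
    (t = false → ∀ y ∈ fre A E, pot F a A E - dang F a A E y < lam a ^ (-(a : ℝ))) →
    avoiderWinsAux F a b fuel t A E := by
  intro fuel
  induction fuel with
  | zero =>
    intro t A E _ hsafe _ _
    rintro ⟨W, hW, hWA⟩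
    exact hsafe W hW hWA
  | succ n IH =>
    intro t A E hdisj hsafe hA hE
    show (if (Finset.univ \ (A ∪ E)).Nonempty then
        if t then
          ∃ S ⊆ Finset.univ \ (A ∪ E), min a (Finset.univ \ (A ∪ E)).card ≤ S.card ∧
            avoiderWinsAux F a b n false (A ∪ S) E
        else
          ∀ S ⊆ Finset.univ \ (A ∪ E), min b (Finset.univ \ (A ∪ E)).card ≤ S.card →
            avoiderWinsAux F a b n true A (E ∪ S)
      else ¬ ∃ W ∈ F, W ⊆ A)
    by_cases hne : (Finset.univ \ (A ∪ E)).Nonempty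
    · rw [if_pos hne]
      have hnefre : (fre A E).Nonempty := hne
      cases t with
      | true =>
        have hpot := hA rfl
        obtain ⟨S, hSsub, hScard, hSsafe, hSbound⟩ := picks F a ha E a A hdisj hsafe hpot
        rw [if_pos rfl]
        refine ⟨S, hSsub, ?_, ?_⟩
        · rw [hScard, fre]
        · apply IH false (A ∪ S) E
          · rw [Finset.disjoint_union_left]
            refine ⟨hdisj, ?_⟩
            rw [Finset.disjoint_left]
            intro z hz
            exact (mem_fre.1 (hSsub hz)).2
          · exact hSsafe
          · intro h; exact absurd h (by simp)
          · intro _ y hy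
            have hbd := hSbound y hy
            have ha1 : (a : ℝ) * (lam a - 1) = 1 := by
              have haR : (a : ℝ) ≠ 0 := Nat.cast_ne_zero.2 ha.ne'
              unfold lam; rw [add_sub_cancel_left]; exact mul_one_div_cancel haR
            nlinarith [dang_nonneg (F := F) ha (A ∪ S) E y]
      | false =>
        rw [if_neg (by simp)]
        intro S hSsub hScard
        have hSne : S.Nonempty := by
          rw [← Finset.card_pos]
          have h1 : 1 ≤ (Finset.univ \ (A ∪ E)).card := Finset.card_pos.2 hne
          omega
        obtain ⟨y, hyS⟩ := hSne
        have hyfre : y ∈ fre A E := hSsub hyS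
        apply IH true A (E ∪ S)
        · rw [Finset.disjoint_union_right]
          refine ⟨hdisj, ?_⟩
          rw [Finset.disjoint_right]
          intro z hz
          exact (mem_fre.1 (hSsub hz)).1
        · exact hsafe
        · intro _
          have h1 := pot_enforcer (F := F) ha A E S hyS (mem_fre.1 hyfre).2
          have h2 := hE rfl y hyfre
          linarith
        · intro h; exact absurd h (by simp)
    · rw [if_neg hne]
      rintro ⟨W, hW, hWA⟩
      exact hsafe W hW hWA

end AvoiderCrit

/-- If `∑_{W ∈ F} (1+1/a)^{-|W|} < (1+1/a)^{-a}`, then Avoider,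
as a first or second player, has a winning strategy in the `(a,b)` Avoider-Enforcer
game `(α, F)`. -/
theorem avoider_criterion (F : Finset (Finset α)) (a b : ℕ) (ha : 0 < a) (hb : 0 < b)
    (h : ∑ W ∈ F, (1 + 1 / (a : ℝ)) ^ (-(W.card : ℝ)) < (1 + 1 / (a : ℝ)) ^ (-(a : ℝ))) :
    AvoiderWins F a b true ∧ AvoiderWins F a b false := by
  classical
  have hlam1 : 1 < AvoiderCrit.lam a := AvoiderCrit.one_lt_lam ha
  have hlam0 : 0 < AvoiderCrit.lam a := AvoiderCrit.lam_pos ha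
  have hpot0 : AvoiderCrit.pot F a (∅ : Finset α) (∅ : Finset α)
      = ∑ W ∈ F, (1 + 1 / (a : ℝ)) ^ (-(W.card : ℝ)) := by
    rw [AvoiderCrit.pot, Finset.filter_true_of_mem (fun W _ => Finset.inter_empty W)]
    apply Finset.sum_congr rfl
    intro W _
    rw [Finset.sdiff_empty]
    rfl
  have hRHS : (1 + 1 / (a : ℝ)) ^ (-(a : ℝ)) = AvoiderCrit.lam a ^ (-(a : ℝ)) := rfl
  have hpot : AvoiderCrit.pot F a (∅ : Finset α) (∅ : Finset α)
      < AvoiderCrit.lam a ^ (-(a : ℝ)) := by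
    rw [hpot0, ← hRHS]; exact h
  have hsafe0 : ∀ W ∈ F, ¬ W ⊆ (∅ : Finset α) := by
    intro W hW hsub
    have hWe : W = ∅ := Finset.subset_empty.1 hsub
    subst hWe
    have hone : (1 : ℝ) ≤ ∑ W ∈ F, (1 + 1 / (a : ℝ)) ^ (-(W.card : ℝ)) := by
      have := Finset.single_le_sum
        (f := fun W : Finset α => (1 + 1 / (a : ℝ)) ^ (-(W.card : ℝ)))
        (fun V _ => (Real.rpow_pos_of_pos hlam0 _).le) hW
      simpa using this
    have hlt1 : AvoiderCrit.lam a ^ (-(a : ℝ)) < 1 := by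
      apply Real.rpow_lt_one_of_one_lt_of_neg hlam1
      have : (0 : ℝ) < a := by exact_mod_cast ha
      linarith
    rw [← hRHS] at hlt1
    linarith
  have hdisj : Disjoint (∅ : Finset α) (∅ : Finset α) := Finset.disjoint_empty_left _
  constructor
  · exact AvoiderCrit.main F a b ha hb _ true ∅ ∅ hdisj hsafe0 (fun _ => hpot)
      (fun hcontra => absurd hcontra (by simp))
  · apply AvoiderCrit.main F a b ha hb _ false ∅ ∅ hdisj hsafe0
      (fun hcontra => absurd hcontra (by simp))
    intro _ y hy
    have := AvoiderCrit.dang_nonneg (F := F) ha (∅ : Finset α) (∅ : Finset α) y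
    linarith
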